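/- Let G act on V = k^d and on k(X)^d via the same representation, where X = (X₁,…,X_d) is a vector of indeterminates. Then Sym(G,V) = Sym(G,X), i.e., the generic symmetry group equals the orbit symmetry group of the generic vector X over the function field. -/

import Mathlib

open Matrix

/-- The vector of indeterminates `X = (X₁,…,X_d)` in `k(X)^d`. -/
noncomputable def Xvec (k : Type*) [Field k] (d : ℕ) :
    Fin d → FractionRing (MvPolynomial (Fin d) k) :=
  fun i => algebraMap (MvPolynomial (Fin d) k) _ (MvPolynomial.X i)

/-- Embedding of scalars `k → k(X)`. -/
noncomputable def toFunField (k : Type*) [Field k] (d : ℕ) :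
    k → FractionRing (MvPolynomial (Fin d) k) :=
  fun a => algebraMap (MvPolynomial (Fin d) k) _ (MvPolynomial.C a)


namespace GenSymAux

variable {G : Type*} {d : ℕ}

/-- The matrix whose columns are `c (t 0), …, c (t (d-1))`. -/
def colMat {S : Type*} [CommRing S] (c : G → Fin d → S) (t : Fin d → G) :
    Matrix (Fin d) (Fin d) S :=
  Matrix.of fun i j => c (t j) i

/-- Left side of the Cramer identity. -/
def sideL {S : Type*} [CommRing S] (c : G → Fin d → S) (π : Equiv.Perm G)
    (t : Fin d → G) (g : G) : Fin d → S :=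
  (colMat c (fun j => π (t j)) * adjugate (colMat c t)) *ᵥ c g

/-- Right side of the Cramer identity. -/
def sideR {S : Type*} [CommRing S] (c : G → Fin d → S) (π : Equiv.Perm G)
    (t : Fin d → G) (g : G) : Fin d → S :=
  (colMat c t).det • c (π g)

lemma mul_colMat {S : Type*} [CommRing S] (c : G → Fin d → S)
    (A : Matrix (Fin d) (Fin d) S) (t : Fin d → G) (π : Equiv.Perm G)
    (hA : ∀ g, A *ᵥ c g = c (π g)) :
    A * colMat c t = colMat c fun j => π (t j) := by
  ext i j
  have := congrFun (hA (t j)) i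
  simpa [colMat, Matrix.mul_apply, Matrix.mulVec, dotProduct] using this

lemma identity_of_A {S : Type*} [CommRing S] (c : G → Fin d → S)
    (π : Equiv.Perm G) (A : Matrix (Fin d) (Fin d) S)
    (hA : ∀ g, A *ᵥ c g = c (π g)) (t : Fin d → G) (g : G) :
    sideL c π t g = sideR c π t g := by
  unfold sideL sideR
  rw [← mul_colMat c A t π hA, Matrix.mul_assoc, Matrix.mul_adjugate, Matrix.mul_smul,
    Matrix.mul_one, Matrix.smul_mulVec, hA]

lemma span_top_of_isUnit {F : Type*} [Field F] (c : G → Fin d → F) (t : Fin d → G)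
    (h : IsUnit (colMat c t)) :
    Submodule.span F (Set.range c) = ⊤ := by
  rw [eq_top_iff]
  intro u _
  obtain ⟨x, hx⟩ := (Matrix.mulVec_surjective_iff_isUnit.mpr h) u
  have hexp : colMat c t *ᵥ x = ∑ j : Fin d, x j • c (t j) := by
    funext i
    simp [colMat, Matrix.mulVec, dotProduct, Finset.sum_apply, mul_comm]
  rw [← hx, hexp]
  exact Submodule.sum_mem _ fun j _ =>
    Submodule.smul_mem _ _ (Submodule.subset_span ⟨t j, rfl⟩)

lemma exists_GL_of_identity {F : Type*} [Field F] (c : G → Fin d → F)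
    (π : Equiv.Perm G) (t : Fin d → G)
    (hdet : (colMat c t).det ≠ 0)
    (hid : ∀ g, sideL c π t g = sideR c π t g) :
    ∃ A : GL (Fin d) F, ∀ g, A.val *ᵥ c g = c (π g) := by
  set A₀ : Matrix (Fin d) (Fin d) F :=
    (colMat c t).det⁻¹ • (colMat c (fun j => π (t j)) * adjugate (colMat c t)) with hA₀
  have hAg : ∀ g, A₀ *ᵥ c g = c (π g) := by
    intro g
    rw [hA₀, Matrix.smul_mulVec]
    have := hid g
    unfold sideL sideR at this
    rw [this, smul_smul, inv_mul_cancel₀ hdet, one_smul]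
  have hspan := span_top_of_isUnit c t ((Matrix.isUnit_iff_isUnit_det _).mpr hdet.isUnit)
  have hsurj : Function.Surjective A₀.mulVec := by
    intro u
    have hu : u ∈ Submodule.span F (Set.range c) := by rw [hspan]; trivial
    have hle : Submodule.span F (Set.range c) ≤ LinearMap.range A₀.mulVecLin := by
      rw [Submodule.span_le]
      rintro _ ⟨h, rfl⟩
      exact ⟨c (π.symm h), by simpa using hAg (π.symm h)⟩
    obtain ⟨x, hx⟩ := hle hu
    exact ⟨x, hx⟩
  have hA : IsUnit A₀ := Matrix.mulVec_surjective_iff_isUnit.mp hsurj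
  exact ⟨hA.unit, fun g => by rw [IsUnit.unit_spec]; exact hAg g⟩

lemma exists_t_of_span {F : Type*} [Field F] (c : G → Fin d → F)
    (hspan : Submodule.span F (Set.range c) = ⊤) :
    ∃ t : Fin d → G, (colMat c t).det ≠ 0 := by
  obtain ⟨b, hb_sub, hb_span, hb_li⟩ := exists_linearIndependent F (Set.range c)
  have hb_top : ⊤ ≤ Submodule.span F (Set.range ((↑) : b → (Fin d → F))) := by
    rw [Subtype.range_coe, hb_span, hspan]
  let B : Module.Basis b F (Fin d → F) := Module.Basis.mk hb_li hb_top
  haveI : Fintype b := FiniteDimensional.fintypeBasisIndex B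
  have hcard : Fintype.card b = d := by
    have h1 := Module.finrank_eq_card_basis B
    rw [Module.finrank_pi] at h1
    simpa using h1.symm
  let e : Fin d ≃ b := (Fintype.equivFinOfCardEq hcard).symm
  have ht : ∀ i : Fin d, ∃ g : G, c g = ((e i : b) : Fin d → F) := fun i => hb_sub (e i).2
  choose t htc using ht
  refine ⟨t, ?_⟩
  have hli : LinearIndependent F (fun j : Fin d => c (t j)) := by
    have h2 := hb_li.comp e e.injective
    have : (fun j : Fin d => c (t j)) = fun j : Fin d => ((e j : b) : Fin d → F) := by
      funext j; exact htc j
    rw [this]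
    exact h2
  have hrows : LinearIndependent F (fun j : Fin d => (colMat c t)ᵀ j) := by
    have : (fun j : Fin d => (colMat c t)ᵀ j) = fun j : Fin d => c (t j) := by
      funext j i; rfl
    rw [this]; exact hli
  have hu : IsUnit (colMat c t) := Matrix.linearIndependent_cols_iff_isUnit.mp hrows
  have := (Matrix.isUnit_iff_isUnit_det _).mp hu
  exact this.ne_zero

section Naturality

variable {S S' : Type*} [CommRing S] [CommRing S'] (ψ : S →+* S')
  (c : G → Fin d → S) (π : Equiv.Perm G) (t : Fin d → G)

lemma map_colMat : (colMat c t).map ψ = colMat (fun g i => ψ (c g i)) t := rfl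

lemma map_det : ψ ((colMat c t).det) = (colMat (fun g i => ψ (c g i)) t).det := by
  rw [RingHom.map_det]
  rfl

lemma map_sideL (g : G) (i : Fin d) :
    ψ (sideL c π t g i) = sideL (fun g i => ψ (c g i)) π t g i := by
  unfold sideL
  rw [RingHom.map_mulVec]
  have hadj : (adjugate (colMat c t)).map ψ = adjugate ((colMat c t).map ψ) := by
    simpa [RingHom.mapMatrix_apply] using RingHom.map_adjugate ψ (colMat c t)
  have h1 : (colMat c (fun j => π (t j)) * adjugate (colMat c t)).map ψ
      = colMat (fun g i => ψ (c g i)) (fun j => π (t j))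
        * adjugate (colMat (fun g i => ψ (c g i)) t) := by
    rw [Matrix.map_mul, hadj, map_colMat ψ c, map_colMat ψ c]
  rw [h1]
  rfl

lemma map_sideR (g : G) (i : Fin d) :
    ψ (sideR c π t g i) = sideR (fun g i => ψ (c g i)) π t g i := by
  unfold sideR
  simp only [Pi.smul_apply, smul_eq_mul]
  rw [_root_.map_mul, map_det ψ c t]

end Naturality

end GenSymAux

open GenSymAux in
/-- `Sym(G,V) = Sym(G,X)`: a permutation is a generic symmetry for the
representation on `k^d` iff it is an orbit symmetry of the vector of indeterminates
`X` over the function field `k(X)`. -/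
theorem generic_sym_iff_orbit_sym_of_indeterminates
    {k G : Type*} [Field k] [Infinite k] [Group G] [Finite G] (d : ℕ)
    (ρ : G →* GL (Fin d) k)
    (hcyc : ∃ v : Fin d → k,
      Submodule.span k (Set.range fun g : G => (ρ g).val.mulVec v) = ⊤)
    (π : Equiv.Perm G) :
    (∀ v : Fin d → k,
        Submodule.span k (Set.range fun g : G => (ρ g).val.mulVec v) = ⊤ →
        ∃ A : GL (Fin d) k,
          ∀ g : G, A.val.mulVec ((ρ g).val.mulVec v) = (ρ (π g)).val.mulVec v) ↔
    ∃ B : GL (Fin d) (FractionRing (MvPolynomial (Fin d) k)),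
      ∀ g : G,
        B.val.mulVec (((ρ g).val.map (toFunField k d)).mulVec (Xvec k d)) =
          ((ρ (π g)).val.map (toFunField k d)).mulVec (Xvec k d) := by
  classical
  let ck : (Fin d → k) → G → Fin d → k := fun v g => (ρ g).val *ᵥ v
  let cP : G → Fin d → MvPolynomial (Fin d) k :=
    fun g => ((ρ g).val.map MvPolynomial.C) *ᵥ fun i => MvPolynomial.X i
  let cF : G → Fin d → FractionRing (MvPolynomial (Fin d) k) :=
    fun g => ((ρ g).val.map (toFunField k d)) *ᵥ Xvec k d
  let ψF : MvPolynomial (Fin d) k →+* FractionRing (MvPolynomial (Fin d) k) :=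
    algebraMap _ _
  -- evaluation sends cP to ck
  have rel1 : ∀ (v : Fin d → k), (fun g i => MvPolynomial.eval v (cP g i)) = ck v := by
    intro v
    funext g i
    show MvPolynomial.eval v ((((ρ g).val.map MvPolynomial.C) *ᵥ fun i => MvPolynomial.X i) i)
      = ((ρ g).val *ᵥ v) i
    rw [RingHom.map_mulVec]
    have h1 : ((ρ g).val.map MvPolynomial.C).map (MvPolynomial.eval v) = (ρ g).val := by
      rw [Matrix.map_map]
      have h2 : ((MvPolynomial.eval v : MvPolynomial (Fin d) k →+* k) ∘
          (MvPolynomial.C : k →+* MvPolynomial (Fin d) k) : k → k) = id := by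
        funext a; simp
      rw [h2, Matrix.map_id]
    have h3 : ((MvPolynomial.eval v : MvPolynomial (Fin d) k →+* k) ∘
        fun i => (MvPolynomial.X i : MvPolynomial (Fin d) k)) = v := by
      funext i; simp
    rw [h1, h3]
  -- the algebra map sends cP to cF
  have rel2 : (fun g i => ψF (cP g i)) = cF := by
    funext g i
    show ψF ((((ρ g).val.map MvPolynomial.C) *ᵥ fun i => MvPolynomial.X i) i)
      = (((ρ g).val.map (toFunField k d)) *ᵥ Xvec k d) i
    rw [RingHom.map_mulVec, Matrix.map_map]
    rfl
  have hinj : Function.Injective ψF :=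
    IsFractionRing.injective (MvPolynomial (Fin d) k) (FractionRing (MvPolynomial (Fin d) k))
  constructor
  · -- forward direction
    intro h
    obtain ⟨v₀, hv₀⟩ := hcyc
    have idk : ∀ (t : Fin d → G) (g : G) (w : Fin d → k),
        (colMat (ck w) t).det ≠ 0 → sideL (ck w) π t g = sideR (ck w) π t g := by
      intro t g w hw
      have hspan := span_top_of_isUnit (ck w) t
        ((Matrix.isUnit_iff_isUnit_det _).mpr hw.isUnit)
      obtain ⟨A, hA⟩ := h w hspan
      exact identity_of_A (ck w) π A.val hA t g
    have idP : ∀ (t : Fin d → G) (g : G) (i : Fin d),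
        (colMat cP t).det * sideL cP π t g i = (colMat cP t).det * sideR cP π t g i := by
      intro t g i
      apply MvPolynomial.funext
      intro w
      rw [_root_.map_mul, _root_.map_mul]
      have hdet := GenSymAux.map_det (MvPolynomial.eval w) cP t
      have hL := map_sideL (MvPolynomial.eval w) cP π t g i
      have hR := map_sideR (MvPolynomial.eval w) cP π t g i
      rw [rel1 w] at hdet hL hR
      rw [hdet, hL, hR]
      by_cases h0 : (colMat (ck w) t).det = 0
      · rw [h0, zero_mul, zero_mul]
      · rw [idk t g w h0]
    obtain ⟨t₀, hdet₀⟩ := exists_t_of_span (ck v₀) hv₀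
    have hdetP : (colMat cP t₀).det ≠ 0 := by
      intro h0
      apply hdet₀
      have hdet := GenSymAux.map_det (MvPolynomial.eval v₀) cP t₀
      rw [rel1 v₀] at hdet
      rw [← hdet, h0, map_zero]
    have hdetF : (colMat cF t₀).det ≠ 0 := by
      intro h0
      apply hdetP
      apply hinj
      have hdet := GenSymAux.map_det ψF cP t₀
      rw [rel2] at hdet
      rw [hdet, h0, map_zero]
    have idF : ∀ g, sideL cF π t₀ g = sideR cF π t₀ g := by
      intro g
      funext i
      have h1 := congrArg ψF (idP t₀ g i)
      rw [_root_.map_mul, _root_.map_mul, GenSymAux.map_det ψF cP t₀, map_sideL ψF cP π t₀ g i,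
        map_sideR ψF cP π t₀ g i, rel2] at h1
      exact mul_left_cancel₀ hdetF h1
    exact exists_GL_of_identity cF π t₀ hdetF idF
  · -- backward direction
    rintro ⟨B, hB⟩ v hv
    have idF : ∀ t g, sideL cF π t g = sideR cF π t g :=
      fun t g => identity_of_A cF π B.val hB t g
    have idP : ∀ t g, sideL cP π t g = sideR cP π t g := by
      intro t g
      funext i
      apply hinj
      have hL := map_sideL ψF cP π t g i
      have hR := map_sideR ψF cP π t g i
      rw [rel2] at hL hR
      rw [hL, hR, idF t g]
    have idk : ∀ t g, sideL (ck v) π t g = sideR (ck v) π t g := by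
      intro t g
      funext i
      have hL := map_sideL (MvPolynomial.eval v) cP π t g i
      have hR := map_sideR (MvPolynomial.eval v) cP π t g i
      rw [rel1 v] at hL hR
      rw [← hL, ← hR, idP t g]
    obtain ⟨t, hdet⟩ := exists_t_of_span (ck v) hv
    exact exists_GL_of_identity (ck v) π t hdet (fun g => idk t g)
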